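/- Bellman recursion for KL control: for the discrete-time KL control problem with deterministic dynamics x_{t+1} = F_t(x_t, u_t), stage costs C_t, terminal cost C_T, reference policy R, and weighting λ > 0, the value function satisfies J_t(x_t) = -λ log ∫_{U_t} exp(-(C_t(x_t,u_t) + J_{t+1}(F_t(x_t,u_t)))/λ) R(du_t|x_t) with J_T = C_T, and the minimizing policy is the Gibbs tilting Q*_{U_t|X_t}(B|x_t) = ∫_B exp(-ρ_t(x_t,u)/λ) R(du|x_t) / ∫_{U_t} exp(-ρ_t(x_t,u)/λ) R(du|x_t), where ρ_t(x_t,u) = C_t(x_t,u) + J_{t+1}(F_t(x_t,u)). -/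

import Mathlib

open MeasureTheory

section KLBellman

variable {X U : Type*} [MeasurableSpace X] [MeasurableSpace U]

/-- Real-valued KL divergence `D(μ‖ν) = ∫ log(dμ/dν) dμ` (meaningful when `μ ≪ ν`
and the log-likelihood ratio is `μ`-integrable). -/
noncomputable def klReal {α : Type*} [MeasurableSpace α] (μ ν : Measure α) : ℝ :=
  ∫ a, llr μ ν a ∂μ

/-- The value function of the discrete-time KL control problem with deterministic
dynamics `x_{t+1} = F_t(x_t,u_t)`, defined by the dynamic-programming recursion:
`J_T = C_T` and `J_t(x) = inf_q { ∫ (C_t(x,u) + J_{t+1}(F_t(x,u))) q(du) + λ D(q‖R_t(·|x)) }`,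
the infimum being over probability measures `q ≪ R_t(·|x)` with finite KL
divergence.  Indexed by remaining steps `k` and current time `t` (`t = T - k`). -/
noncomputable def klBellman (C : ℕ → X → U → ℝ) (CT : X → ℝ) (F : ℕ → X → U → X)
    (R : ℕ → X → Measure U) (lam : ℝ) : ℕ → ℕ → X → ℝ
  | 0, _, x => CT x
  | k + 1, t, x =>
      sInf { v : ℝ | ∃ q : Measure U, IsProbabilityMeasure q ∧ q ≪ R t x ∧
        Integrable (llr q (R t x)) q ∧
        v = (∫ u, (C t x u + klBellman C CT F R lam k (t + 1) (F t x u)) ∂q) +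
          lam * klReal q (R t x) }

section KLAuxiliary

open Real

variable {α : Type*} [MeasurableSpace α]

/-- Gibbs inequality: the KL divergence integral is nonnegative. -/
lemma klAux_integral_llr_nonneg (μ ν : Measure α) [IsProbabilityMeasure μ]
    [IsProbabilityMeasure ν] (hμν : μ ≪ ν) (h : Integrable (llr μ ν) μ) :
    0 ≤ ∫ x, llr μ ν x ∂μ := by
  have hfin : Integrable (fun x => (ν.rnDeriv μ x).toReal) μ := by
    refine integrable_toReal_of_lintegral_ne_top (Measure.measurable_rnDeriv ν μ).aemeasurable ?_
    exact (Measure.lintegral_rnDeriv_le.trans_lt (by simp)).ne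
  have hle : ∀ᵐ x ∂μ, -llr μ ν x ≤ (ν.rnDeriv μ x).toReal - 1 := by
    filter_upwards [Measure.inv_rnDeriv hμν, Measure.rnDeriv_pos hμν,
      hμν.ae_le (Measure.rnDeriv_lt_top μ ν)] with x hinv hpos hlt
    have hpos' : 0 < (μ.rnDeriv ν x).toReal := ENNReal.toReal_pos hpos.ne' hlt.ne
    have h2 : ((μ.rnDeriv ν x).toReal)⁻¹ = (ν.rnDeriv μ x).toReal := by
      rw [← ENNReal.toReal_inv, ← hinv, Pi.inv_apply]
    calc -llr μ ν x = log (((μ.rnDeriv ν x).toReal)⁻¹) := by rw [llr, Real.log_inv]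
      _ ≤ ((μ.rnDeriv ν x).toReal)⁻¹ - 1 :=
          Real.log_le_sub_one_of_pos (by positivity)
      _ = (ν.rnDeriv μ x).toReal - 1 := by rw [h2]
  have hmono := integral_mono_ae h.neg (hfin.sub (integrable_const 1)) hle
  simp only [Pi.sub_apply] at hmono
  rw [show (fun a => (-llr μ ν) a) = fun a => -(llr μ ν a) from rfl] at hmono
  rw [integral_neg, integral_sub hfin (integrable_const 1)] at hmono
  have hone : ∫ x, (ν.rnDeriv μ x).toReal ∂μ ≤ 1 := by
    rw [integral_toReal (Measure.measurable_rnDeriv ν μ).aemeasurable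
      (Measure.rnDeriv_lt_top ν μ)]
    have h3 := Measure.lintegral_rnDeriv_le (μ := ν) (ν := μ)
    calc (∫⁻ x, ν.rnDeriv μ x ∂μ).toReal ≤ (ν Set.univ).toReal :=
        ENNReal.toReal_mono (by simp) h3
      _ = 1 := by simp
  simp only [integral_const, measure_univ, ENNReal.toReal_one, smul_eq_mul, one_mul, probReal_univ, mul_one] at hmono
  linarith

/-- The Gibbs variational facts: the exponentially tilted measure is a probability
measure, has integrable log-likelihood ratio, achieves the value `-λ log Z`, and
`-λ log Z` is a lower bound for the free-energy functional. -/
lemma klAux_gibbs (R : Measure α) [IsProbabilityMeasure R] {lam : ℝ} (hlam : 0 < lam)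
    (ρ : α → ℝ) (hρm : Measurable ρ) {M : ℝ} (hρb : ∀ u, |ρ u| ≤ M) :
    IsProbabilityMeasure (R.tilted fun u => -ρ u / lam) ∧
    Integrable (llr (R.tilted fun u => -ρ u / lam) R) (R.tilted fun u => -ρ u / lam) ∧
    (∫ u, ρ u ∂(R.tilted fun u => -ρ u / lam)) +
        lam * ∫ u, llr (R.tilted fun u => -ρ u / lam) R u ∂(R.tilted fun u => -ρ u / lam)
      = -lam * Real.log (∫ u, Real.exp (-ρ u / lam) ∂(R)) ∧
    (∀ q : Measure α, IsProbabilityMeasure q → q ≪ R → Integrable (llr q R) q →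
      -lam * Real.log (∫ u, Real.exp (-ρ u / lam) ∂(R))
        ≤ (∫ u, ρ u ∂q) + lam * ∫ u, llr q R u ∂q) := by
  set f : α → ℝ := fun u => -ρ u / lam with hf
  have hfm : Measurable f := (hρm.neg).div_const lam
  have hfb : ∀ u, |f u| ≤ M / lam := by
    intro u
    rw [hf, abs_div, abs_of_pos hlam]
    rw [abs_neg]
    gcongr
    exact hρb u
  have hexp_int : ∀ (μ : Measure α) [IsFiniteMeasure μ],
      Integrable (fun u => Real.exp (f u)) μ := by
    intro μ _
    refine (integrable_const (Real.exp (M / lam))).mono'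
      (hfm.exp.aestronglyMeasurable) (ae_of_all _ fun u => ?_)
    rw [Real.norm_eq_abs, abs_of_pos (Real.exp_pos _)]
    exact Real.exp_le_exp.2 ((abs_le.1 (hfb u)).2)
  have hρ_int : ∀ (μ : Measure α) [IsFiniteMeasure μ], Integrable ρ μ := by
    intro μ _
    refine (integrable_const M).mono' hρm.aestronglyMeasurable (ae_of_all _ fun u => ?_)
    rw [Real.norm_eq_abs]; exact hρb u
  have hf_int : ∀ (μ : Measure α) [IsFiniteMeasure μ], Integrable f μ := by
    intro μ _
    have h1 : Integrable (fun u => -(ρ u / lam)) μ := ((hρ_int μ).div_const lam).neg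
    refine h1.congr (ae_of_all _ fun u => ?_)
    simp [hf, neg_div]
  set Z : ℝ := ∫ u, Real.exp (f u) ∂(R) with hZ
  have hZpos : 0 < Z := integral_exp_pos (hexp_int R)
  set Q : Measure α := R.tilted f with hQdef
  have hQprob : IsProbabilityMeasure Q := isProbabilityMeasure_tilted (hexp_int R)
  have hQR : Q ≪ R := tilted_absolutelyContinuous R f
  have hRQ : R ≪ Q := absolutelyContinuous_tilted (hexp_int R)
  have hllrQ : llr Q R =ᵐ[Q] fun u => f u - Real.log Z :=
    hQR.ae_le (log_rnDeriv_tilted_left_self (hexp_int R))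
  have hllrQ_int : Integrable (llr Q R) Q :=
    Integrable.congr ((hf_int Q).sub (integrable_const _)) hllrQ.symm
  have hfint : ∀ (μ : Measure α) [IsProbabilityMeasure μ],
      ∫ u, f u ∂μ = -(∫ u, ρ u ∂μ) / lam := by
    intro μ _
    have h1 : ∫ u, f u ∂μ = ∫ u, -(ρ u / lam) ∂μ := by
      refine integral_congr_ae (ae_of_all _ fun u => ?_); simp [hf, neg_div]
    rw [h1, integral_neg, integral_div, neg_div]
  have hvalQ : (∫ u, ρ u ∂Q) + lam * ∫ u, llr Q R u ∂Q = -lam * Real.log Z := by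
    have h1 : ∫ u, llr Q R u ∂Q = ∫ u, f u ∂Q - Real.log Z := by
      rw [integral_congr_ae hllrQ, integral_sub (hf_int Q) (integrable_const _)]
      simp [measure_univ]
    rw [h1, hfint Q]
    field_simp
    ring
  refine ⟨hQprob, hllrQ_int, hvalQ, fun q hq hqR hllr_int => ?_⟩
  have hqQ : q ≪ Q := hqR.trans hRQ
  have hllrqQ_int : Integrable (llr q Q) q :=
    integrable_llr_tilted_right hqR (hf_int q) hllr_int (hexp_int R)
  have hchain : ∫ u, llr q Q u ∂q = ∫ u, llr q R u ∂q - ∫ u, f u ∂q + Real.log Z :=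
    integral_llr_tilted_right hqR (hf_int q) (hexp_int R) hllr_int
  have hnn : 0 ≤ ∫ u, llr q Q u ∂q := klAux_integral_llr_nonneg q Q hqQ hllrqQ_int
  rw [hchain, hfint q, neg_div, sub_neg_eq_add] at hnn
  have hP : lam * ((∫ u, ρ u ∂q) / lam) = ∫ u, ρ u ∂q := mul_div_cancel₀ _ hlam.ne'
  have h2 := mul_nonneg hlam.le hnn
  rw [mul_add, mul_add, hP] at h2
  linarith

/-- Boundedness of the soft-min (log-sum-exp) of a bounded function. -/
lemma klAux_bound (R : Measure α) [IsProbabilityMeasure R] {lam : ℝ} (hlam : 0 < lam)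
    (ρ : α → ℝ) (hρm : Measurable ρ) {M : ℝ} (hρb : ∀ u, |ρ u| ≤ M) :
    |(-lam) * Real.log (∫ u, Real.exp (-ρ u / lam) ∂(R))| ≤ M := by
  have hexp_int : Integrable (fun u => Real.exp (-ρ u / lam)) R := by
    refine (integrable_const (Real.exp (M / lam))).mono'
      (((hρm.neg).div_const lam).exp.aestronglyMeasurable) (ae_of_all _ fun u => ?_)
    rw [Real.norm_eq_abs, abs_of_pos (Real.exp_pos _)]
    refine Real.exp_le_exp.2 ((div_le_div_iff_of_pos_right hlam).2 ?_)
    have := abs_le.1 (hρb u); linarith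
  set Z : ℝ := ∫ u, Real.exp (-ρ u / lam) ∂(R) with hZ
  have hZpos : 0 < Z := integral_exp_pos hexp_int
  have hub : Z ≤ Real.exp (M / lam) := by
    calc Z ≤ ∫ _, Real.exp (M / lam) ∂(R) := by
          refine integral_mono hexp_int (integrable_const _) fun u => ?_
          refine Real.exp_le_exp.2 ((div_le_div_iff_of_pos_right hlam).2 ?_)
          have := abs_le.1 (hρb u); linarith
      _ = Real.exp (M / lam) := by simp [measure_univ]
  have hlb : Real.exp (-(M / lam)) ≤ Z := by
    calc Real.exp (-(M / lam)) = ∫ _, Real.exp (-(M / lam)) ∂(R) := by simp [measure_univ]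
      _ ≤ Z := by
          refine integral_mono (integrable_const _) hexp_int fun u => ?_
          rw [show -(M / lam) = -M / lam by ring]
          refine Real.exp_le_exp.2 ((div_le_div_iff_of_pos_right hlam).2 ?_)
          have := abs_le.1 (hρb u); linarith
  have habs : |Real.log Z| ≤ M / lam := by
    rw [abs_le]
    constructor
    · rw [← Real.log_exp (-(M / lam))]
      exact Real.log_le_log (Real.exp_pos _) hlb
    · rw [← Real.log_exp (M / lam)]
      exact Real.log_le_log hZpos hub
  calc |(-lam) * Real.log Z| = lam * |Real.log Z| := by
        rw [abs_mul, abs_neg, abs_of_pos hlam]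
    _ ≤ lam * (M / lam) := mul_le_mul_of_nonneg_left habs hlam.le
    _ = M := by field_simp

end KLAuxiliary

/-- Bellman recursion for KL control: with deterministic dynamics,
bounded measurable costs, reference policy `R`, and `λ > 0`, the value function
satisfies `J_T = C_T` and
`J_t(x) = -λ log ∫ exp(-(C_t(x,u) + J_{t+1}(F_t(x,u)))/λ) R(du|x)`, and the
minimizing policy is the Gibbs tilting
`Q*(B|x) = ∫_B exp(-ρ_t(x,u)/λ) R(du|x) / ∫ exp(-ρ_t(x,u)/λ) R(du|x)` where
`ρ_t(x,u) = C_t(x,u) + J_{t+1}(F_t(x,u))`. -/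
theorem klBellman_recursion_gibbs
    (C : ℕ → X → U → ℝ) (CT : X → ℝ) (F : ℕ → X → U → X)
    (R : ℕ → X → Measure U) (lam : ℝ) (hlam : 0 < lam)
    (hRprob : ∀ t x, IsProbabilityMeasure (R t x))
    (hRmeas : ∀ t, Measurable (R t))
    (hFmeas : ∀ t, Measurable (Function.uncurry (F t)))
    (hCmeas : ∀ t, Measurable (Function.uncurry (C t)))
    (hCTmeas : Measurable CT)
    (hCbdd : ∃ M : ℝ, ∀ t x u, |C t x u| ≤ M)
    (hCTbdd : ∃ M : ℝ, ∀ x, |CT x| ≤ M) :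
    (∀ (t : ℕ) (x : X), klBellman C CT F R lam 0 t x = CT x) ∧
    ∀ (k t : ℕ) (x : X),
      (klBellman C CT F R lam (k + 1) t x =
        -lam * Real.log (∫ u,
          Real.exp (-(C t x u + klBellman C CT F R lam k (t + 1) (F t x u)) / lam)
            ∂(R t x))) ∧
      (let ρ : U → ℝ := fun u => C t x u + klBellman C CT F R lam k (t + 1) (F t x u)
       let Z : ℝ := ∫ u, Real.exp (-ρ u / lam) ∂(R t x)
       let Qstar : Measure U :=
         (R t x).withDensity fun u => ENNReal.ofReal (Real.exp (-ρ u / lam) / Z)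
       IsProbabilityMeasure Qstar ∧ Qstar ≪ R t x ∧
         (∫ u, ρ u ∂Qstar) + lam * klReal Qstar (R t x) =
           klBellman C CT F R lam (k + 1) t x ∧
         ∀ B : Set U, MeasurableSet B →
           Qstar B = ENNReal.ofReal ((∫ u in B, Real.exp (-ρ u / lam) ∂(R t x)) / Z)) := by
  obtain ⟨MC, hMC⟩ := hCbdd
  obtain ⟨MT, hMT⟩ := hCTbdd
  -- The formula for the recursion at one step, given measurability and boundedness
  -- of the continuation value.
  have hρmeas : ∀ k, (∀ t', Measurable (klBellman C CT F R lam k t')) → ∀ t x,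
      Measurable fun u => C t x u + klBellman C CT F R lam k (t + 1) (F t x u) := by
    intro k hm t x
    have h1 : Measurable fun u => C t x u := (hCmeas t).comp measurable_prodMk_left
    have h2 : Measurable fun u => F t x u := (hFmeas t).comp measurable_prodMk_left
    exact h1.add ((hm (t + 1)).comp h2)
  have hρbdd : ∀ k B, (∀ t' x', |klBellman C CT F R lam k t' x'| ≤ B) → ∀ t x u,
      |C t x u + klBellman C CT F R lam k (t + 1) (F t x u)| ≤ MC + B := by
    intro k B hB t x u
    exact (abs_add_le _ _).trans (add_le_add (hMC t x u) (hB (t + 1) (F t x u)))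
  have hform : ∀ k, (∀ t', Measurable (klBellman C CT F R lam k t')) →
      ∀ B, (∀ t' x', |klBellman C CT F R lam k t' x'| ≤ B) →
      ∀ t x, klBellman C CT F R lam (k + 1) t x =
        -lam * Real.log (∫ u,
          Real.exp (-(C t x u + klBellman C CT F R lam k (t + 1) (F t x u)) / lam)
            ∂(R t x)) := by
    intro k hm B hB t x
    haveI := hRprob t x
    obtain ⟨hQp, hQi, hQv, hlb⟩ :=
      klAux_gibbs (R t x) hlam _ (hρmeas k hm t x) (hρbdd k B hB t x)
    have hset : klBellman C CT F R lam (k + 1) t x =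
        sInf { v : ℝ | ∃ q : Measure U, IsProbabilityMeasure q ∧ q ≪ R t x ∧
          Integrable (llr q (R t x)) q ∧
          v = (∫ u, (C t x u + klBellman C CT F R lam k (t + 1) (F t x u)) ∂q) +
            lam * klReal q (R t x) } := by
      simp only [klBellman]
    rw [hset]
    apply le_antisymm
    · refine csInf_le ⟨-lam * Real.log (∫ u,
        Real.exp (-(C t x u + klBellman C CT F R lam k (t + 1) (F t x u)) / lam)
          ∂(R t x)), ?_⟩ ?_
      · rintro v ⟨q, hq1, hq2, hq3, rfl⟩
        exact hlb q hq1 hq2 hq3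
      · exact ⟨_, hQp, tilted_absolutelyContinuous _ _, hQi, hQv.symm⟩
    · refine le_csInf ⟨_, _, hQp, tilted_absolutelyContinuous _ _, hQi, hQv.symm⟩ ?_
      rintro v ⟨q, hq1, hq2, hq3, rfl⟩
      exact hlb q hq1 hq2 hq3
  -- Measurability and boundedness of the value function, by induction on k.
  have key : ∀ k, (∀ t, Measurable (klBellman C CT F R lam k t)) ∧
      (∃ B, ∀ t x, |klBellman C CT F R lam k t x| ≤ B) := by
    intro k
    induction k with
    | zero =>
        constructor
        · intro t
          have : klBellman C CT F R lam 0 t = CT := rfl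
          rw [this]; exact hCTmeas
        · exact ⟨MT, fun t x => hMT x⟩
    | succ k ih =>
        obtain ⟨hm, B, hB⟩ := ih
        constructor
        · intro t
          have heq : klBellman C CT F R lam (k + 1) t = fun x =>
              -lam * Real.log (∫ u,
                Real.exp (-(C t x u + klBellman C CT F R lam k (t + 1) (F t x u)) / lam)
                  ∂(R t x)) := funext (hform k hm B hB t)
          rw [heq]
          set κ : ProbabilityTheory.Kernel X U := ⟨R t, hRmeas t⟩ with hκ
          haveI : ProbabilityTheory.IsMarkovKernel κ := ⟨fun x => hRprob t x⟩
          have hg : StronglyMeasurable (Function.uncurry fun x u =>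
              Real.exp (-(C t x u + klBellman C CT F R lam k (t + 1) (F t x u)) / lam)) := by
            refine Measurable.stronglyMeasurable ?_
            refine Real.measurable_exp.comp ?_
            refine Measurable.div_const (Measurable.neg ?_) lam
            exact (hCmeas t).add ((hm (t + 1)).comp (hFmeas t))
          have h1 := (MeasureTheory.StronglyMeasurable.integral_kernel_prod_right
            (κ := κ) hg).measurable
          exact (Real.measurable_log.comp h1).const_mul (-lam)
        · refine ⟨MC + B, fun t x => ?_⟩
          rw [hform k hm B hB t x]
          haveI := hRprob t x
          exact klAux_bound (R t x) hlam _ (hρmeas k hm t x) (hρbdd k B hB t x)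
  refine ⟨fun t x => rfl, fun k t x => ?_⟩
  obtain ⟨hm, B, hB⟩ := key k
  haveI := hRprob t x
  obtain ⟨hQp, hQi, hQv, hlb⟩ :=
    klAux_gibbs (R t x) hlam _ (hρmeas k hm t x) (hρbdd k B hB t x)
  have hformk := hform k hm B hB t x
  refine ⟨hformk, ?_⟩
  have hQeq : ((R t x).withDensity fun u => ENNReal.ofReal
      (Real.exp (-(C t x u + klBellman C CT F R lam k (t + 1) (F t x u)) / lam) /
        ∫ u, Real.exp (-(C t x u + klBellman C CT F R lam k (t + 1) (F t x u)) / lam)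
          ∂(R t x))) =
      (R t x).tilted fun u =>
        -(C t x u + klBellman C CT F R lam k (t + 1) (F t x u)) / lam := rfl
  refine ⟨hQp, tilted_absolutelyContinuous _ _, ?_, ?_⟩
  · rw [hformk]
    exact hQv
  · intro s hs
    rw [hQeq, tilted_apply_eq_ofReal_integral _ s, integral_div]

end KLBellman
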